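/- Let X be a real Banach space in which every f ∈ S(X*) is uniformly w*-semidenting: for every ε > 0 there exists 0 < δ < 1 such that for any f ∈ S(X*) there is x ∈ S(X) with S(B(X*), x, δ) ⊆ B(f, ε). Then the duality map is uniformly quasicontinuous: for every ε > 0 there exists δ > 0 such that for any f ∈ S(X*) there is x ∈ S(X) with D(S(X) ∩ B(x, δ)) ⊆ B(f, ε). -/

import Mathlib

open NormedSpace

/-- If every norm-one functional is uniformly w*-semidenting, then the duality map
is uniformly quasicontinuous. -/
theorem stmt_8 {X : Type*} [NormedAddCommGroup X] [NormedSpace ℝ X] [CompleteSpace X]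
    (h : ∀ ε : ℝ, 0 < ε → ∃ δ : ℝ, 0 < δ ∧ δ < 1 ∧
      ∀ f : StrongDual ℝ X, ‖f‖ = 1 → ∃ x : X, ‖x‖ = 1 ∧
        {g : StrongDual ℝ X | ‖g‖ ≤ 1 ∧ 1 - δ < g x} ⊆ Metric.ball f ε) :
    ∀ ε : ℝ, 0 < ε → ∃ δ : ℝ, 0 < δ ∧
      ∀ f : StrongDual ℝ X, ‖f‖ = 1 → ∃ x : X, ‖x‖ = 1 ∧
        {g : StrongDual ℝ X | ‖g‖ = 1 ∧ ∃ z : X, ‖z‖ = 1 ∧ ‖z - x‖ < δ ∧ g z = 1} ⊆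
          Metric.ball f ε := by
  intro ε hε
  obtain ⟨δ, hδ0, hδ1, hδ⟩ := h ε hε
  refine ⟨δ, hδ0, fun f hf => ?_⟩
  obtain ⟨x, hx, hsub⟩ := hδ f hf
  refine ⟨x, hx, fun g hg => ?_⟩
  obtain ⟨hg1, z, hz, hzx, hgz⟩ := hg
  refine hsub ⟨hg1.le, ?_⟩
  have hbound : |g (z - x)| ≤ ‖z - x‖ := by
    calc |g (z - x)| ≤ ‖g‖ * ‖z - x‖ := g.le_opNorm _
    _ = ‖z - x‖ := by rw [hg1, one_mul]
  have : g x = 1 - g (z - x) := by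
    have := g.map_sub z x
    rw [hgz] at this
    linarith
  rw [this]
  have := abs_le.mp hbound
  linarith
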